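/- Let a, b > 0 with a ≠ b, U₀ = diag(a,b), U₁ = diag(b,a). The set {Q ∈ SO(2) : rank(U₀ - Q U₁) = 1} has exactly two elements. That is, U₀ is rank-one connected to exactly two matrices in the well SO(2)U₁. -/

import Mathlib

open Matrix

def SO2 (Q : Matrix (Fin 2) (Fin 2) ℝ) : Prop := Qᵀ * Q = 1 ∧ Q.det = 1

lemma rank_outer (x y e : ℝ) (hx : x ≠ 0) :
    (!![x, x*e; y, y*e] : Matrix (Fin 2) (Fin 2) ℝ).rank = 1 := by
  have hfact : (!![x, x*e; y, y*e] : Matrix (Fin 2) (Fin 2) ℝ)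
      = (!![x; y] : Matrix (Fin 2) (Fin 1) ℝ) * (!![1, e] : Matrix (Fin 1) (Fin 2) ℝ) := by
    ext i j
    fin_cases i <;> fin_cases j <;> simp [Matrix.mul_apply, Fin.sum_univ_one]
  have hle : (!![x, x*e; y, y*e] : Matrix (Fin 2) (Fin 2) ℝ).rank ≤ 1 := by
    rw [hfact]
    calc _ ≤ (!![x; y] : Matrix (Fin 2) (Fin 1) ℝ).rank := Matrix.rank_mul_le_left _ _
    _ ≤ Fintype.card (Fin 1) := Matrix.rank_le_card_width _
    _ = 1 := by simp
  have hne : (!![x, x*e; y, y*e] : Matrix (Fin 2) (Fin 2) ℝ).rank ≠ 0 := by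
    intro h0
    unfold Matrix.rank at h0
    rw [Submodule.finrank_eq_zero, LinearMap.range_eq_bot] at h0
    have := congrFun (congrArg DFunLike.coe h0) ![1, 0]
    have h1 := congrFun this 0
    simp [Matrix.mulVecLin, Matrix.mulVec, dotProduct, Fin.sum_univ_two] at h1
    exact hx h1
  omega

theorem exactly_two_rank_one_connections (a b : ℝ) (ha : 0 < a) (hb : 0 < b) (hab : a ≠ b) :
    {Q : Matrix (Fin 2) (Fin 2) ℝ |
        SO2 Q ∧ (!![a, 0; 0, b] - Q * !![b, 0; 0, a]).rank = 1}.ncard = 2 := by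
  have hd : (0:ℝ) < a^2+b^2 := by positivity
  have hdne : a^2+b^2 ≠ 0 := ne_of_gt hd
  set c : ℝ := 2*a*b/(a^2+b^2) with hc
  set s : ℝ := (a^2-b^2)/(a^2+b^2) with hs
  have hab2 : a^2 - b^2 ≠ 0 := by
    intro h
    exact hab ((sq_eq_sq₀ ha.le hb.le).mp (by linarith))
  have hsne : s ≠ 0 := div_ne_zero hab2 hdne
  have hcs : c^2 + s^2 = 1 := by
    rw [hc, hs, div_pow, div_pow, ← add_div, div_eq_one_iff_eq (by positivity)]
    ring
  have hca : a - c*b = a*s := by rw [hc, hs]; field_simp; ring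
  have hcb : b - c*a = -(b*s) := by rw [hc, hs]; field_simp; ring
  have hset : {Q : Matrix (Fin 2) (Fin 2) ℝ |
        SO2 Q ∧ (!![a, 0; 0, b] - Q * !![b, 0; 0, a]).rank = 1}
      = {!![c, -s; s, c], !![c, s; -s, c]} := by
    ext Q
    simp only [Set.mem_setOf_eq, Set.mem_insert_iff, Set.mem_singleton_iff]
    constructor
    · rintro ⟨⟨horth, hdet1⟩, hrank⟩
      obtain ⟨p, q, r, t, rfl⟩ : ∃ p q r t, Q = !![p, q; r, t] :=
        ⟨_, _, _, _, Matrix.eta_fin_two Q⟩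
      have hT : (!![p, q; r, t] : Matrix (Fin 2) (Fin 2) ℝ)ᵀ = !![p, r; q, t] := by
        ext i j; fin_cases i <;> fin_cases j <;> rfl
      rw [hT, ← Matrix.ext_iff] at horth
      have e1 := horth 0 0
      have e2 := horth 0 1
      simp [Matrix.mul_apply, Fin.sum_univ_two, Matrix.one_apply] at e1 e2
      rw [Matrix.det_fin_two] at hdet1
      simp at hdet1
      have htp : t = p := by linear_combination (-t)*e1 + p*hdet1 + r*e2
      rw [htp] at e2 hdet1
      have h1 : p*(q+r) = 0 := by linear_combination e2
      have h2 : r*(q+r) = 0 := by linear_combination e1 - hdet1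
      have hqr : q = -r := by linear_combination p*h1 + r*h2 - (q+r)*e1
      have hdet0 : (!![a,0;0,b] - !![p, q; r, t] * !![b,0;0,a]).det = 0 := by
        by_contra hne0
        have hu : IsUnit (!![a,0;0,b] - !![p, q; r, t] * !![b,0;0,a]) :=
          (Matrix.isUnit_iff_isUnit_det _).mpr (isUnit_iff_ne_zero.mpr hne0)
        have h2 := Matrix.rank_of_isUnit _ hu
        rw [hrank] at h2
        simp at h2
      rw [Matrix.det_fin_two] at hdet0
      simp [Matrix.sub_apply, Matrix.mul_apply, Fin.sum_univ_two] at hdet0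
      rw [htp, hqr] at hdet0
      have hdetc : 2*a*b - p*(a^2+b^2) = 0 := by linear_combination hdet0 - a*b*e1
      have hpc : p = c := by rw [hc, eq_div_iff hdne]; linarith
      have hr2 : (r - s) * (r + s) = 0 := by linear_combination e1 - hcs - (p+c)*hpc
      rcases mul_eq_zero.mp hr2 with h | h
      · left
        have hrs : r = s := by linarith
        rw [htp, hqr, hpc, hrs]
      · right
        have hrs : r = -s := by linarith
        rw [htp, hqr, hpc, hrs]
        norm_num
    · have hT1 : (!![c, -s; s, c] : Matrix (Fin 2) (Fin 2) ℝ)ᵀ = !![c, s; -s, c] := by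
        ext i j; fin_cases i <;> fin_cases j <;> rfl
      have hT2 : (!![c, s; -s, c] : Matrix (Fin 2) (Fin 2) ℝ)ᵀ = !![c, -s; s, c] := by
        ext i j; fin_cases i <;> fin_cases j <;> rfl
      rintro (rfl | rfl)
      · refine ⟨⟨?_, ?_⟩, ?_⟩
        · rw [hT1]
          ext i j
          fin_cases i <;> fin_cases j <;>
            simp [Matrix.mul_apply, Fin.sum_univ_two, Matrix.one_apply] <;>
            first
            | linear_combination hcs
            | ring
        · rw [Matrix.det_fin_two]
          simp
          linear_combination hcs
        · have hM : !![a, 0; 0, b] - !![c, -s; s, c] * !![b, 0; 0, a]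
              = !![a*s, (a*s)*1; -(b*s), (-(b*s))*1] := by
            ext i j
            fin_cases i <;> fin_cases j <;>
              simp [Matrix.sub_apply, Matrix.mul_apply, Fin.sum_univ_two] <;>
              linarith [hca, hcb]
          rw [hM]
          exact rank_outer _ _ _ (mul_ne_zero ha.ne' hsne)
      · refine ⟨⟨?_, ?_⟩, ?_⟩
        · rw [hT2]
          ext i j
          fin_cases i <;> fin_cases j <;>
            simp [Matrix.mul_apply, Fin.sum_univ_two, Matrix.one_apply] <;>
            first
            | linear_combination hcs
            | ring
        · rw [Matrix.det_fin_two]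
          simp
          linear_combination hcs
        · have hM : !![a, 0; 0, b] - !![c, s; -s, c] * !![b, 0; 0, a]
              = !![a*s, (a*s)*(-1); b*s, (b*s)*(-1)] := by
            ext i j
            fin_cases i <;> fin_cases j <;>
              simp [Matrix.sub_apply, Matrix.mul_apply, Fin.sum_univ_two] <;>
              linarith [hca, hcb]
          rw [hM]
          exact rank_outer _ _ _ (mul_ne_zero ha.ne' hsne)
  rw [hset]
  refine Set.ncard_pair ?_
  intro h
  have h01 := Matrix.ext_iff.mpr h 0 1
  simp at h01
  exact hsne (by linarith)
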